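/- Let n ≥ 1, t > 0, and let f : ℂⁿ → ℂ be entire with |f(Z)| ≤ C·exp(a·‖Z‖) for all Z ∈ ℂⁿ, for some constants C, a ≥ 0. Then for every X ∈ ℂⁿ, the mean value formula ∫_{ℂⁿ} f(X + S) dγ_t(S) = f(X) holds; in particular the Gaussian integral of an entire function of exponential growth equals its value at the center. -/

import Mathlib

open MeasureTheory ProbabilityTheory Complex

/-- The Gaussian measure on `ℂ` whose real and imaginary parts are independent
real Gaussians of mean `0` and variance `t`. -/
noncomputable def gaussC (t : ℝ) : Measure ℂ :=
  ((gaussianReal 0 t.toNNReal).prod (gaussianReal 0 t.toNNReal)).map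
    (fun p => (p.1 : ℂ) + (p.2 : ℂ) * Complex.I)

/-- The Gaussian measure `γ_t` on `ℂⁿ`: the pushforward of the `2n`-fold product of
`N(0,t)` under the coordinatewise map `(u,v) ↦ u + iv`, realized as the `n`-fold
product of complex Gaussians. -/
noncomputable def gaussCn (n : ℕ) (t : ℝ) : Measure (Fin n → ℂ) :=
  Measure.pi fun _ => gaussC t


open MeasureTheory ProbabilityTheory Complex Set
open scoped Real NNReal ENNReal

noncomputable section

lemma aux_prod_gaussian (v : ℝ≥0) (hv : v ≠ 0) :
    (gaussianReal 0 v).prod (gaussianReal 0 v)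
      = (volume : Measure (ℝ × ℝ)).withDensity
          (fun p => gaussianPDF 0 v p.1 * gaussianPDF 0 v p.2) := by
  refine Measure.prod_eq (fun s u hs hu => ?_)
  rw [withDensity_apply _ (hs.prod hu), Measure.volume_eq_prod, ← Measure.prod_restrict,
    lintegral_prod_mul ((measurable_gaussianPDF 0 v).aemeasurable)
      ((measurable_gaussianPDF 0 v).aemeasurable),
    gaussianReal_apply 0 hv s, gaussianReal_apply 0 hv u]

lemma aux_map_withDensity {α β : Type*} [MeasurableSpace α] [MeasurableSpace β]
    (e : α ≃ᵐ β) (μ : Measure α) (D : β → ℝ≥0∞) (hD : Measurable D) :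
    (μ.withDensity (fun a => D (e a))).map e = (μ.map e).withDensity D := by
  ext s hs
  rw [Measure.map_apply e.measurable hs, withDensity_apply _ (e.measurable hs),
    withDensity_apply _ hs, setLIntegral_map hs hD e.measurable]

lemma aux_gaussC_eq {t : ℝ} (ht : 0 < t) :
    gaussC t = (volume : Measure ℂ).withDensity
      (fun z => ENNReal.ofReal
        (gaussianPDFReal 0 t.toNNReal z.re * gaussianPDFReal 0 t.toNNReal z.im)) := by
  have hv : (t.toNNReal : ℝ≥0) ≠ 0 := by
    simp [Real.toNNReal_eq_zero, not_le, ht]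
  have hfun : (fun p : ℝ × ℝ => (p.1 : ℂ) + (p.2 : ℂ) * Complex.I)
      = ⇑Complex.measurableEquivRealProd.symm := by
    funext p
    rw [Complex.measurableEquivRealProd_symm_apply]
    simp [Complex.ext_iff]
  have hD : Measurable (fun z : ℂ => ENNReal.ofReal
      (gaussianPDFReal 0 t.toNNReal z.re * gaussianPDFReal 0 t.toNNReal z.im)) := by
    apply Measurable.ennreal_ofReal
    exact ((measurable_gaussianPDFReal 0 _).comp Complex.measurable_re).mul
      ((measurable_gaussianPDFReal 0 _).comp Complex.measurable_im)
  have hcomp : ∀ p : ℝ × ℝ,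
      gaussianPDF 0 t.toNNReal p.1 * gaussianPDF 0 t.toNNReal p.2
        = ENNReal.ofReal
          (gaussianPDFReal 0 t.toNNReal (Complex.measurableEquivRealProd.symm p).re
            * gaussianPDFReal 0 t.toNNReal (Complex.measurableEquivRealProd.symm p).im) := by
    intro p
    simp only [Complex.measurableEquivRealProd_symm_apply]
    rw [gaussianPDF, gaussianPDF, ← ENNReal.ofReal_mul (gaussianPDFReal_nonneg _ _ _)]
  have hmd := aux_map_withDensity Complex.measurableEquivRealProd.symm volume
    (fun z => ENNReal.ofReal
      (gaussianPDFReal 0 t.toNNReal z.re * gaussianPDFReal 0 t.toNNReal z.im)) hD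
  rw [(Complex.volume_preserving_equiv_real_prod.symm _).map_eq] at hmd
  rw [gaussC, aux_prod_gaussian _ hv, hfun, ← hmd]
  congr 1
  congr 1
  exact funext hcomp

lemma aux_meas_dens {t : ℝ} : Measurable (fun z : ℂ =>
    (gaussianPDFReal 0 t.toNNReal z.re * gaussianPDFReal 0 t.toNNReal z.im).toNNReal) :=
  (((measurable_gaussianPDFReal 0 _).comp Complex.measurable_re).mul
    ((measurable_gaussianPDFReal 0 _).comp Complex.measurable_im)).real_toNNReal

lemma aux_integral_gaussC {t : ℝ} (ht : 0 < t) (g : ℂ → ℂ) :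
    ∫ z, g z ∂gaussC t
      = ∫ z, (gaussianPDFReal 0 t.toNNReal z.re * gaussianPDFReal 0 t.toNNReal z.im) • g z := by
  rw [aux_gaussC_eq ht]
  rw [show (fun z : ℂ => ENNReal.ofReal
      (gaussianPDFReal 0 t.toNNReal z.re * gaussianPDFReal 0 t.toNNReal z.im))
    = (fun z : ℂ => ((gaussianPDFReal 0 t.toNNReal z.re
        * gaussianPDFReal 0 t.toNNReal z.im).toNNReal : ℝ≥0∞)) from rfl]
  rw [integral_withDensity_eq_integral_smul aux_meas_dens g]
  congr 1
  funext z
  rw [NNReal.smul_def, Real.coe_toNNReal _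
    (mul_nonneg (gaussianPDFReal_nonneg _ _ _) (gaussianPDFReal_nonneg _ _ _))]

lemma aux_integrable_gaussC {t : ℝ} (ht : 0 < t) {E : Type*} [NormedAddCommGroup E] [NormedSpace ℝ E] (g : ℂ → E)
    (h : Integrable (fun z : ℂ =>
      (gaussianPDFReal 0 t.toNNReal z.re * gaussianPDFReal 0 t.toNNReal z.im) • g z) volume) :
    Integrable g (gaussC t) := by
  rw [aux_gaussC_eq ht]
  rw [show (fun z : ℂ => ENNReal.ofReal
      (gaussianPDFReal 0 t.toNNReal z.re * gaussianPDFReal 0 t.toNNReal z.im))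
    = (fun z : ℂ => ((gaussianPDFReal 0 t.toNNReal z.re
        * gaussianPDFReal 0 t.toNNReal z.im).toNNReal : ℝ≥0∞)) from rfl]
  rw [integrable_withDensity_iff_integrable_smul aux_meas_dens]
  apply h.congr
  filter_upwards with z
  rw [NNReal.smul_def, Real.coe_toNNReal _
    (mul_nonneg (gaussianPDFReal_nonneg _ _ _) (gaussianPDFReal_nonneg _ _ _))]

lemma aux_int_exp_abs_mul_gauss {b : ℝ} (a : ℝ) (hb : 0 < b) :
    Integrable (fun x : ℝ => Real.exp (a * |x|) * Real.exp (-b * x ^ 2)) := by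
  have h1 : Integrable (fun x : ℝ => Real.exp (a ^ 2 / (4 * b)) *
      (Real.exp (-b * (x - a / (2 * b)) ^ 2) + Real.exp (-b * (x + a / (2 * b)) ^ 2))) := by
    refine Integrable.const_mul ?_ _
    exact ((integrable_exp_neg_mul_sq hb).comp_sub_right (a / (2 * b))).add
      (((integrable_exp_neg_mul_sq hb).comp_sub_right (-(a / (2 * b)))).congr
        (by filter_upwards with x; rw [sub_neg_eq_add]))
  refine h1.mono' ?_ ?_
  · exact (Continuous.mul (by continuity) (by continuity)).aestronglyMeasurable
  · filter_upwards with x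
    rw [Real.norm_eq_abs, _root_.abs_of_nonneg (by positivity), ← Real.exp_add, mul_add,
      ← Real.exp_add, ← Real.exp_add]
    rcases le_total 0 x with hx | hx
    · refine le_add_of_le_of_nonneg (Real.exp_le_exp.2 ?_) (Real.exp_nonneg _)
      rw [abs_eq_self.2 hx]
      have h : a ^ 2 / (4 * b) + -b * (x - a / (2 * b)) ^ 2 = a * x + -b * x ^ 2 := by
        field_simp; ring
      linarith
    · refine le_add_of_nonneg_of_le (Real.exp_nonneg _) (Real.exp_le_exp.2 ?_)
      rw [abs_eq_neg_self.2 hx]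
      have h : a ^ 2 / (4 * b) + -b * (x + a / (2 * b)) ^ 2 = a * -x + -b * x ^ 2 := by
        field_simp; ring
      linarith

lemma aux_int_pdf_exp {t : ℝ} (a : ℝ) (ht : 0 < t) :
    Integrable (fun x : ℝ => gaussianPDFReal 0 t.toNNReal x * Real.exp (a * |x|)) := by
  have hv : ((t.toNNReal : ℝ≥0) : ℝ) = t := Real.coe_toNNReal _ ht.le
  have : (fun x : ℝ => gaussianPDFReal 0 t.toNNReal x * Real.exp (a * |x|))
      = fun x => (Real.sqrt (2 * Real.pi * t))⁻¹ *
          (Real.exp (a * |x|) * Real.exp (-(2*t)⁻¹ * x ^ 2)) := by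
    funext x
    rw [gaussianPDFReal, hv]
    have : -(x - 0) ^ 2 / (2 * t) = -(2*t)⁻¹ * x ^ 2 := by field_simp; ring
    rw [this]
    ring
  rw [this]
  exact (aux_int_exp_abs_mul_gauss a (by positivity)).const_mul _

lemma aux_circle {g : ℂ → ℂ} (hg : Differentiable ℂ g) {r : ℝ} (hr : 0 < r) :
    ∫ θ in Ioo (-Real.pi) Real.pi, g (circleMap 0 r θ) = (2 * Real.pi) • g 0 := by
  have hC := (hg.differentiableOn (s := Metric.closedBall (0:ℂ) r)).circleIntegral_sub_inv_smul
    (Metric.mem_ball_self hr)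
  rw [circleIntegral] at hC
  have hker : ∀ θ : ℝ, deriv (circleMap 0 r) θ • (circleMap 0 r θ - 0)⁻¹ • g (circleMap 0 r θ)
      = Complex.I * g (circleMap 0 r θ) := by
    intro θ
    rw [deriv_circleMap, smul_eq_mul, smul_eq_mul, sub_zero]
    have hne : circleMap 0 r θ ≠ 0 := circleMap_ne_center (ne_of_gt hr)
    field_simp
  simp_rw [hker] at hC
  rw [intervalIntegral.integral_const_mul] at hC
  have h2 : ∫ θ in (0:ℝ)..(2*Real.pi), g (circleMap 0 r θ) = (2*Real.pi) • g 0 := by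
    apply mul_left_cancel₀ Complex.I_ne_zero
    rw [hC, smul_eq_mul]
    rw [Complex.real_smul]
    push_cast
    ring
  have hP : Function.Periodic (fun θ => g (circleMap 0 r θ)) (2 * Real.pi) :=
    (periodic_circleMap 0 r).comp g
  have h3 := hP.intervalIntegral_add_eq (-Real.pi) 0
  simp only [zero_add] at h3
  have h4 : ∫ θ in (-Real.pi)..(-Real.pi + 2*Real.pi), g (circleMap 0 r θ)
      = (2*Real.pi) • g 0 := h3.trans h2
  rw [show -Real.pi + 2*Real.pi = Real.pi by ring] at h4
  rw [← MeasureTheory.integral_Ioc_eq_integral_Ioo,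
    ← intervalIntegral.integral_of_le (by linarith [Real.pi_pos] : -Real.pi ≤ Real.pi)]
  exact h4

lemma aux_one_dim {t : ℝ} (ht : 0 < t) {g : ℂ → ℂ} (hg : Differentiable ℂ g)
    {C a : ℝ} (ha : 0 ≤ a)
    (hbound : ∀ z, ‖g z‖ ≤ C * Real.exp (a * ‖z‖)) :
    ∫ z, g z ∂gaussC t = g 0 := by
  have hC : 0 ≤ C := le_trans (norm_nonneg _) (by simpa using hbound 0)
  have hv : ((t.toNNReal : ℝ≥0) : ℝ) = t := Real.coe_toNNReal _ ht.le
  rw [aux_integral_gaussC ht g]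
  set φ : ℝ → ℝ := gaussianPDFReal 0 t.toNNReal with hφ
  set F : ℂ → ℂ := fun z => (φ z.re * φ z.im) • g z with hF
  set W : ℝ → ℝ := fun r => (2*Real.pi*t)⁻¹ * Real.exp (-r^2/(2*t)) with hW
  have hφc : Continuous φ := by
    rw [hφ, gaussianPDFReal_def]; fun_prop
  have hφnn : ∀ x, 0 ≤ φ x := fun x => gaussianPDFReal_nonneg _ _ _
  have hFc : Continuous F :=
    ((hφc.comp Complex.continuous_re).mul (hφc.comp Complex.continuous_im)).smul hg.continuous
  -- master integrability of F on ℂ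
  have hbb : Integrable (fun p : ℝ × ℝ =>
      C * ((φ p.1 * Real.exp (a * |p.1|)) * (φ p.2 * Real.exp (a * |p.2|))))
      (volume : Measure (ℝ × ℝ)) := by
    rw [Measure.volume_eq_prod]
    exact ((aux_int_pdf_exp a ht).mul_prod (aux_int_pdf_exp a ht)).const_mul C
  have hCb : Integrable (fun z : ℂ =>
      C * ((φ z.re * Real.exp (a * |z.re|)) * (φ z.im * Real.exp (a * |z.im|))))
      (volume : Measure ℂ) := by
    refine ((Complex.volume_preserving_equiv_real_prod.symm _).integrable_comp_emb
      Complex.measurableEquivRealProd.symm.measurableEmbedding).1 ?_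
    apply hbb.congr
    filter_upwards with p
    simp [Function.comp, Complex.measurableEquivRealProd_symm_apply]
  have hFi : Integrable F (volume : Measure ℂ) := by
    refine hCb.mono' hFc.aestronglyMeasurable ?_
    filter_upwards with z
    have hnrm : ‖F z‖ = (φ z.re * φ z.im) * ‖g z‖ := by
      rw [hF]
      rw [norm_smul, Real.norm_eq_abs,
        abs_eq_self.2 (mul_nonneg (hφnn _) (hφnn _))]
    rw [hnrm]
    have h1 : ‖g z‖ ≤ C * (Real.exp (a*|z.re|) * Real.exp (a*|z.im|)) := by
      refine (hbound z).trans ?_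
      rw [← Real.exp_add]
      refine mul_le_mul_of_nonneg_left (Real.exp_le_exp.2 ?_) hC
      rw [← mul_add]
      exact mul_le_mul_of_nonneg_left (Complex.norm_le_abs_re_add_abs_im z) ha
    calc (φ z.re * φ z.im) * ‖g z‖
        ≤ (φ z.re * φ z.im) * (C * (Real.exp (a*|z.re|) * Real.exp (a*|z.im|))) :=
          mul_le_mul_of_nonneg_left h1 (mul_nonneg (hφnn _) (hφnn _))
      _ = C * ((φ z.re * Real.exp (a * |z.re|)) * (φ z.im * Real.exp (a * |z.im|))) := by ring
  -- polar coordinates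
  rw [show (∫ z : ℂ, (φ z.re * φ z.im) • g z) = ∫ z : ℂ, F z from rfl,
    ← Complex.integral_comp_polarCoord_symm F]
  -- pointwise identities
  have hre : ∀ p : ℝ × ℝ, (Complex.polarCoord.symm p).re = p.1 * Real.cos p.2 := by
    intro p
    simp [Complex.polarCoord_symm_apply, Complex.cos_ofReal_re, Complex.sin_ofReal_re]
  have him : ∀ p : ℝ × ℝ, (Complex.polarCoord.symm p).im = p.1 * Real.sin p.2 := by
    intro p
    simp [Complex.polarCoord_symm_apply, Complex.cos_ofReal_re, Complex.sin_ofReal_re]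
  have hcirc : ∀ p : ℝ × ℝ, Complex.polarCoord.symm p = circleMap 0 p.1 p.2 := by
    intro p
    rw [Complex.polarCoord_symm_apply, circleMap, Complex.exp_mul_I]
    push_cast
    ring
  have hWeq : ∀ p : ℝ × ℝ, φ (p.1 * Real.cos p.2) * φ (p.1 * Real.sin p.2) = W p.1 := by
    intro p
    rw [hφ, hW, gaussianPDFReal, gaussianPDFReal, hv]
    have h1 : (Real.sqrt (2*Real.pi*t))⁻¹ * (Real.sqrt (2*Real.pi*t))⁻¹ = (2*Real.pi*t)⁻¹ := by
      rw [← mul_inv, Real.mul_self_sqrt (by positivity)]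
    have h2 : Real.exp (-(p.1 * Real.cos p.2 - 0)^2/(2*t))
        * Real.exp (-(p.1*Real.sin p.2 - 0)^2/(2*t)) = Real.exp (-p.1^2/(2*t)) := by
      rw [← Real.exp_add]
      congr 1
      have hcs := Real.sin_sq_add_cos_sq p.2
      have hnum : -(p.1 * Real.cos p.2 - 0)^2 + -(p.1*Real.sin p.2 - 0)^2 = -p.1^2 := by
        linear_combination (-(p.1^2)) * hcs
      rw [← add_div, hnum]
    calc (Real.sqrt (2*Real.pi*t))⁻¹ * Real.exp (-(p.1 * Real.cos p.2 - 0)^2/(2*t))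
        * ((Real.sqrt (2*Real.pi*t))⁻¹ * Real.exp (-(p.1*Real.sin p.2 - 0)^2/(2*t)))
        = ((Real.sqrt (2*Real.pi*t))⁻¹ * (Real.sqrt (2*Real.pi*t))⁻¹)
          * (Real.exp (-(p.1 * Real.cos p.2 - 0)^2/(2*t))
            * Real.exp (-(p.1*Real.sin p.2 - 0)^2/(2*t))) := by ring
      _ = (2*Real.pi*t)⁻¹ * Real.exp (-p.1^2/(2*t)) := by rw [h1, h2]
  have hFW : ∀ p : ℝ × ℝ, p.1 • F (Complex.polarCoord.symm p)
      = (p.1 * W p.1) • g (circleMap 0 p.1 p.2) := by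
    intro p
    rw [hF]
    show p.1 • ((φ (Complex.polarCoord.symm p).re * φ (Complex.polarCoord.symm p).im)
      • g (Complex.polarCoord.symm p)) = _
    rw [hre p, him p, hWeq p, hcirc p, smul_smul]
  -- integrability on the polar target
  have hIntT : IntegrableOn (fun p : ℝ × ℝ => p.1 • F (Complex.polarCoord.symm p))
      polarCoord.target := by
    set B : ℝ × ℝ → ℝ × ℝ →L[ℝ] ℝ × ℝ := fun p =>
      LinearMap.toContinuousLinearMap (Matrix.toLin (Module.Basis.finTwoProd ℝ) (Module.Basis.finTwoProd ℝ)
        !![Real.cos p.2, -p.1 * Real.sin p.2; Real.sin p.2, p.1 * Real.cos p.2]) with hB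
    have hd : ∀ p ∈ polarCoord.target, HasFDerivWithinAt polarCoord.symm (B p) polarCoord.target p :=
      fun p _ => (hasFDerivAt_polarCoord_symm p).hasFDerivWithinAt
    have hBdet : ∀ p, (B p).det = p.1 := by
      intro p
      conv_rhs => rw [← one_mul p.1, ← Real.cos_sq_add_sin_sq p.2]
      simp only [hB, neg_mul, LinearMap.det_toContinuousLinearMap, LinearMap.det_toLin,
        Matrix.det_fin_two_of, sub_neg_eq_add]
      ring
    have hinj : Set.InjOn polarCoord.symm polarCoord.target := polarCoord.symm.injOn
    have hFR : IntegrableOn (fun q : ℝ × ℝ => F ((q.1 : ℂ) + (q.2 : ℂ) * Complex.I))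
        (polarCoord.symm '' polarCoord.target) := by
      have hInt2 : Integrable (fun q : ℝ × ℝ => F ((q.1 : ℂ) + (q.2 : ℂ) * Complex.I)) := by
        refine (((Complex.volume_preserving_equiv_real_prod.symm _).integrable_comp_emb
          Complex.measurableEquivRealProd.symm.measurableEmbedding).2 hFi).congr ?_
        filter_upwards with q
        have hq : ((q.1:ℂ) + (q.2:ℂ)*Complex.I) = Complex.measurableEquivRealProd.symm q := by
          rw [Complex.measurableEquivRealProd_symm_apply]
          simp [Complex.ext_iff]
        simp [Function.comp, ← hq]
      exact hInt2.integrableOn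
    have hkey := (integrableOn_image_iff_integrableOn_abs_det_fderiv_smul volume
      polarCoord.open_target.measurableSet hd hinj
      (fun q : ℝ × ℝ => F ((q.1 : ℂ) + (q.2 : ℂ) * Complex.I))).1 hFR
    refine hkey.congr_fun (fun p hp => ?_) polarCoord.open_target.measurableSet
    beta_reduce
    rw [hBdet p]
    have hp1 : 0 < p.1 := hp.1
    rw [abs_eq_self.2 hp1.le]
    congr 1
    rw [polarCoord_symm_apply, Complex.polarCoord_symm_apply]
    push_cast
    ring
  rw [show (∫ p in polarCoord.target, p.1 • F (Complex.polarCoord.symm p))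
      = ∫ p in Ioi (0:ℝ) ×ˢ Ioo (-Real.pi) Real.pi, p.1 • F (Complex.polarCoord.symm p) from by
    rw [polarCoord_target]]
  rw [polarCoord_target] at hIntT
  rw [Measure.volume_eq_prod] at hIntT
  rw [Measure.volume_eq_prod, setIntegral_prod _ hIntT]
  have hinner : ∀ r ∈ Ioi (0:ℝ),
      (∫ θ in Ioo (-Real.pi) Real.pi, (r, θ).1 • F (Complex.polarCoord.symm (r, θ)))
      = (r * W r * (2 * Real.pi)) • g 0 := by
    intro r hr
    have heq : ∀ θ : ℝ, (r, θ).1 • F (Complex.polarCoord.symm (r, θ))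
        = (r * W r) • g (circleMap 0 r θ) := fun θ => hFW (r, θ)
    simp_rw [heq]
    rw [integral_smul, aux_circle hg hr, smul_smul]
  rw [setIntegral_congr_fun measurableSet_Ioi hinner, integral_smul_const]
  have hscal : ∫ r in Ioi (0:ℝ), r * W r * (2*Real.pi) = 1 := by
    have h1 : ∀ r ∈ Ioi (0:ℝ), r * W r * (2*Real.pi)
        = t⁻¹ * (r * Real.exp (-(2*t)⁻¹ * r^2)) := by
      intro r hr
      rw [hW]
      show r * ((2*Real.pi*t)⁻¹ * Real.exp (-r^2/(2*t))) * (2*Real.pi) = _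
      have hπ := Real.pi_ne_zero
      have harg : -r^2/(2*t) = -(2*t)⁻¹ * r^2 := by field_simp
      rw [harg]
      field_simp
    rw [setIntegral_congr_fun measurableSet_Ioi h1, integral_const_mul]
    have h3 := integral_rpow_mul_exp_neg_mul_rpow (by norm_num : (0:ℝ) < 2)
      (by norm_num : (-1:ℝ) < 1) (by positivity : (0:ℝ) < (2*t)⁻¹)
    have h4 : ∫ x in Ioi (0:ℝ), x ^ (1:ℝ) * Real.exp (-(2*t)⁻¹ * x ^ (2:ℝ))
        = ∫ r in Ioi (0:ℝ), r * Real.exp (-(2*t)⁻¹ * r^2) := by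
      refine setIntegral_congr_fun measurableSet_Ioi (fun x hx => ?_)
      rw [Real.rpow_one, show ((2:ℝ)) = ((2:ℕ):ℝ) by norm_num, Real.rpow_natCast]
    rw [← h4, h3]
    rw [show (-(1+1)/2 : ℝ) = -1 by norm_num, Real.rpow_neg_one,
      show ((1+1)/2 : ℝ) = 1 by norm_num, Real.Gamma_one, inv_inv]
    field_simp
  rw [hscal, one_smul]

lemma aux_measurable_mk : Measurable (fun p : ℝ × ℝ => (p.1 : ℂ) + (p.2 : ℂ) * Complex.I) :=
  (Complex.measurable_ofReal.comp measurable_fst).add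
    ((Complex.measurable_ofReal.comp measurable_snd).mul_const Complex.I)

instance (t : ℝ) : IsProbabilityMeasure (gaussC t) := by
  rw [gaussC]
  exact Measure.isProbabilityMeasure_map aux_measurable_mk.aemeasurable

instance (n : ℕ) (t : ℝ) : IsProbabilityMeasure (gaussCn n t) := by
  rw [gaussCn]; infer_instance

lemma aux_int_density {t a C : ℝ} (ht : 0 < t) (ha : 0 ≤ a) (hC : 0 ≤ C)
    {E : Type*} [NormedAddCommGroup E] [NormedSpace ℝ E] {g : ℂ → E} (hgc : Continuous g)
    (hb : ∀ z, ‖g z‖ ≤ C * Real.exp (a * ‖z‖)) :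
    Integrable (fun z : ℂ =>
      (gaussianPDFReal 0 t.toNNReal z.re * gaussianPDFReal 0 t.toNNReal z.im) • g z)
      (volume : Measure ℂ) := by
  set φ : ℝ → ℝ := gaussianPDFReal 0 t.toNNReal with hφ
  have hφc : Continuous φ := by
    rw [hφ, gaussianPDFReal_def]; fun_prop
  have hφnn : ∀ x, 0 ≤ φ x := fun x => gaussianPDFReal_nonneg _ _ _
  have hbb : Integrable (fun p : ℝ × ℝ =>
      C * ((φ p.1 * Real.exp (a * |p.1|)) * (φ p.2 * Real.exp (a * |p.2|))))
      (volume : Measure (ℝ × ℝ)) := by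
    rw [Measure.volume_eq_prod]
    exact ((aux_int_pdf_exp a ht).mul_prod (aux_int_pdf_exp a ht)).const_mul C
  have hCb : Integrable (fun z : ℂ =>
      C * ((φ z.re * Real.exp (a * |z.re|)) * (φ z.im * Real.exp (a * |z.im|))))
      (volume : Measure ℂ) := by
    refine ((Complex.volume_preserving_equiv_real_prod.symm _).integrable_comp_emb
      Complex.measurableEquivRealProd.symm.measurableEmbedding).1 ?_
    apply hbb.congr
    filter_upwards with p
    simp [Function.comp, Complex.measurableEquivRealProd_symm_apply]
  refine hCb.mono' ?_ ?_
  · exact (((hφc.comp Complex.continuous_re).mul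
      (hφc.comp Complex.continuous_im)).smul hgc).aestronglyMeasurable
  · filter_upwards with z
    have hnrm : ‖(φ z.re * φ z.im) • g z‖ = (φ z.re * φ z.im) * ‖g z‖ := by
      rw [norm_smul, Real.norm_eq_abs, abs_eq_self.2 (mul_nonneg (hφnn _) (hφnn _))]
    rw [hnrm]
    have h1 : ‖g z‖ ≤ C * (Real.exp (a*|z.re|) * Real.exp (a*|z.im|)) := by
      refine (hb z).trans ?_
      rw [← Real.exp_add]
      refine mul_le_mul_of_nonneg_left (Real.exp_le_exp.2 ?_) hC
      rw [← mul_add]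
      exact mul_le_mul_of_nonneg_left (Complex.norm_le_abs_re_add_abs_im z) ha
    calc (φ z.re * φ z.im) * ‖g z‖
        ≤ (φ z.re * φ z.im) * (C * (Real.exp (a*|z.re|) * Real.exp (a*|z.im|))) :=
          mul_le_mul_of_nonneg_left h1 (mul_nonneg (hφnn _) (hφnn _))
      _ = C * ((φ z.re * Real.exp (a * |z.re|)) * (φ z.im * Real.exp (a * |z.im|))) := by ring

lemma aux_integrable_gaussC_of_growth {t a C : ℝ} (ht : 0 < t) (ha : 0 ≤ a) (hC : 0 ≤ C)
    {E : Type*} [NormedAddCommGroup E] [NormedSpace ℝ E] {g : ℂ → E} (hgc : Continuous g)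
    (hb : ∀ z, ‖g z‖ ≤ C * Real.exp (a * ‖z‖)) :
    Integrable g (gaussC t) :=
  aux_integrable_gaussC ht g (aux_int_density ht ha hC hgc hb)

lemma aux_int_exp_abs_gaussC {t a : ℝ} (ht : 0 < t) (ha : 0 ≤ a) :
    Integrable (fun z : ℂ => Real.exp (a * ‖z‖)) (gaussC t) :=
  aux_integrable_gaussC_of_growth ht ha zero_le_one
    (Real.continuous_exp.comp (continuous_const.mul continuous_norm))
    (fun z => by rw [Real.norm_eq_abs, abs_eq_self.2 (Real.exp_nonneg _), one_mul])

lemma aux_int_prod_pi {t a : ℝ} (ht : 0 < t) (ha : 0 ≤ a) (n : ℕ) :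
    Integrable (fun Z : Fin n → ℂ => ∏ j, Real.exp (a * ‖Z j‖)) (gaussCn n t) := by
  induction n with
  | zero =>
      simp only [Finset.univ_eq_empty, Finset.prod_empty]
      exact integrable_const 1
  | succ n ih =>
      have hmp := (measurePreserving_piFinSuccAbove (fun _ : Fin (n+1) => gaussC t) 0).symm
      rw [gaussCn, ← hmp.integrable_comp_emb (MeasurableEquiv.measurableEmbedding _)]
      simp_rw [MeasurableEquiv.piFinSuccAbove_symm_apply, Fin.insertNthEquiv,
        Fin.prod_univ_succ, Fin.insertNth_zero]
      simp only [Fin.zero_succAbove, Function.comp_def, Equiv.coe_fn_mk,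
        Fin.cons_zero, Fin.cons_succ]
      exact (aux_int_exp_abs_gaussC ht ha).mul_prod ih

lemma aux_cons_zero_zero (n : ℕ) : (Fin.cons (0:ℂ) (0 : Fin n → ℂ) : Fin (n+1) → ℂ) = 0 := by
  funext j
  refine Fin.cases ?_ ?_ j <;> simp

lemma aux_diff_cons_left {n : ℕ} (z : ℂ) :
    Differentiable ℂ (fun w : Fin n → ℂ => (Fin.cons z w : Fin (n+1) → ℂ)) := by
  rw [differentiable_pi]
  intro i
  induction i using Fin.cases with
  | zero => simpa using differentiable_const z
  | succ i => simpa using differentiable_pi.1 differentiable_id i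

lemma aux_diff_cons_right {n : ℕ} :
    Differentiable ℂ (fun z : ℂ => (Fin.cons z (0 : Fin n → ℂ) : Fin (n+1) → ℂ)) := by
  rw [differentiable_pi]
  intro i
  induction i using Fin.cases with
  | zero => simpa using differentiable_id
  | succ i => simpa using differentiable_const (0:ℂ)

lemma aux_main {t a : ℝ} (ht : 0 < t) (ha : 0 ≤ a) :
    ∀ (n : ℕ) (g : (Fin n → ℂ) → ℂ), Differentiable ℂ g →
      ∀ C : ℝ, (∀ Z, ‖g Z‖ ≤ C * ∏ j, Real.exp (a * ‖Z j‖)) →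
      ∫ Z, g Z ∂gaussCn n t = g 0 := by
  intro n
  induction n with
  | zero =>
      intro g _ C _
      have hg0 : ∀ Z : Fin 0 → ℂ, g Z = g 0 := fun Z => by
        congr 1; exact Subsingleton.elim _ _
      rw [integral_congr_ae (ae_of_all _ hg0), integral_const, probReal_univ, one_smul]
  | succ n ih =>
      intro g hg C hb
      have hC : 0 ≤ C := by
        have h0 := hb 0
        simp only [Pi.zero_apply, map_zero, norm_zero, mul_zero, Real.exp_zero,
          Finset.prod_const_one, mul_one] at h0
        exact le_trans (norm_nonneg _) h0
      have hint : Integrable g (gaussCn (n+1) t) := by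
        refine ((aux_int_prod_pi ht ha (n+1)).const_mul C).mono'
          hg.continuous.aestronglyMeasurable ?_
        filter_upwards with Z
        exact hb Z
      have hmp := (measurePreserving_piFinSuccAbove (fun _ : Fin (n+1) => gaussC t) 0).symm
      have hconsform : ∀ p : ℂ × (Fin n → ℂ),
          (MeasurableEquiv.piFinSuccAbove (fun _ : Fin (n+1) => ℂ) 0).symm p
            = Fin.cons p.1 p.2 := by
        intro p
        simp [MeasurableEquiv.piFinSuccAbove_symm_apply, Fin.insertNthEquiv, Fin.insertNth_zero]
      have h1 : ∫ Z, g Z ∂gaussCn (n+1) t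
          = ∫ p : ℂ × (Fin n → ℂ), g (Fin.cons p.1 p.2) ∂((gaussC t).prod (gaussCn n t)) := by
        rw [gaussCn, ← hmp.integral_comp']
        apply integral_congr_ae
        filter_upwards with p
        rw [hconsform p]
      have hint2 : Integrable (fun p : ℂ × (Fin n → ℂ) => g (Fin.cons p.1 p.2))
          ((gaussC t).prod (gaussCn n t)) := by
        have h2 := (hmp.integrable_comp_emb (MeasurableEquiv.measurableEmbedding _)).2
          (by rw [gaussCn] at hint; exact hint)
        apply h2.congr
        filter_upwards with p
        rw [Function.comp_apply, hconsform p]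
      rw [h1, integral_prod _ hint2]
      have hin : ∀ z : ℂ, (∫ w, g (Fin.cons z w) ∂gaussCn n t) = g (Fin.cons z 0) := by
        intro z
        refine ih (fun w => g (Fin.cons z w)) (hg.comp (aux_diff_cons_left z))
          (C * Real.exp (a * ‖z‖)) (fun w => ?_)
        have h3 := hb (Fin.cons z w)
        rw [Fin.prod_univ_succ] at h3
        simpa [Fin.cons_zero, Fin.cons_succ, mul_assoc] using h3
      rw [integral_congr_ae (ae_of_all _ hin)]
      have hd1 : Differentiable ℂ (fun z : ℂ => g (Fin.cons z (0 : Fin n → ℂ))) :=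
        hg.comp aux_diff_cons_right
      have hb1 : ∀ z : ℂ, ‖g (Fin.cons z (0 : Fin n → ℂ))‖
          ≤ C * Real.exp (a * ‖z‖) := by
        intro z
        have h3 := hb (Fin.cons z 0)
        rw [Fin.prod_univ_succ] at h3
        simpa [Fin.cons_zero, Fin.cons_succ] using h3
      rw [aux_one_dim ht hd1 ha hb1, aux_cons_zero_zero]

end

/-- Mean value formula: the Gaussian integral of an entire function on `ℂⁿ`
of exponential growth equals its value at the center. -/
theorem gaussian_mean_value_entire
    (n : ℕ) (hn : 1 ≤ n) (t : ℝ) (ht : 0 < t)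
    (f : (Fin n → ℂ) → ℂ) (hf : ∀ Z, AnalyticAt ℂ f Z)
    (C a : ℝ) (hC : 0 ≤ C) (ha : 0 ≤ a)
    (hgrowth : ∀ Z, ‖f Z‖ ≤
      C * Real.exp (a * Real.sqrt (∑ j, Complex.normSq (Z j))))
    (X : Fin n → ℂ) :
    ∫ S, f (X + S) ∂(gaussCn n t) = f X := by
  have hdf : Differentiable ℂ f := fun Z => (hf Z).differentiableAt
  have hsum : ∀ Y : Fin n → ℂ,
      Real.sqrt (∑ j, Complex.normSq (Y j)) ≤ ∑ j, ‖Y j‖ := by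
    intro Y
    rw [show (∑ j, Complex.normSq (Y j)) = ∑ j, (‖Y j‖)^2 from
      Finset.sum_congr rfl fun j _ => (Complex.sq_norm _).symm]
    refine le_trans (Real.sqrt_le_sqrt
      (Finset.sum_sq_le_sq_sum_of_nonneg fun j _ => norm_nonneg _)) ?_
    rw [Real.sqrt_sq (Finset.sum_nonneg fun j _ => norm_nonneg _)]
  have hgd : Differentiable ℂ (fun S : Fin n → ℂ => f (X + S)) :=
    hdf.comp (differentiable_id.const_add X)
  have hbg : ∀ S : Fin n → ℂ, ‖f (X + S)‖
      ≤ (C * Real.exp (a * ∑ j, ‖X j‖))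
        * ∏ j, Real.exp (a * ‖S j‖) := by
    intro S
    refine (hgrowth (X + S)).trans ?_
    have h1 : a * Real.sqrt (∑ j, Complex.normSq ((X + S) j))
        ≤ a * ((∑ j, ‖X j‖) + ∑ j, ‖S j‖) := by
      refine mul_le_mul_of_nonneg_left ?_ ha
      refine (hsum (X + S)).trans ?_
      rw [← Finset.sum_add_distrib]
      refine Finset.sum_le_sum fun j _ => ?_
      simpa using norm_add_le (X j) (S j)
    calc C * Real.exp (a * Real.sqrt (∑ j, Complex.normSq ((X + S) j)))
        ≤ C * Real.exp (a * ((∑ j, ‖X j‖) + ∑ j, ‖S j‖)) :=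
          mul_le_mul_of_nonneg_left (Real.exp_le_exp.2 h1) hC
      _ = (C * Real.exp (a * ∑ j, ‖X j‖))
            * ∏ j, Real.exp (a * ‖S j‖) := by
          rw [mul_add, Real.exp_add, ← mul_assoc]
          congr 1
          rw [Finset.mul_sum, Real.exp_sum]
  have hmain := aux_main ht ha n (fun S => f (X + S)) hgd
    (C * Real.exp (a * ∑ j, ‖X j‖)) hbg
  simpa using hmain
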